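/- Let G₂(t) = -1/24 + ∑_{d≥1} σ(d) t^d ∈ ℚ[[t]] where σ(d) is the sum of divisors of d. Define F(t) = 32·G₂(t²)² - 40·G₂(t²)·G₂(t) + 8·G₂(t)² - t·G₂'(t). Then F(t) = 4·t²·G₂'(t²), where G₂'(t²) denotes the formal derivative of G₂ evaluated at t² (i.e., the composition of G₂' with t ↦ t²). -/

import Mathlib

open PowerSeries

/-- The Eisenstein series of weight 2 as a formal power series over ℚ. -/
noncomputable def G2 : ℚ⟦X⟧ :=
  PowerSeries.mk fun d => if d = 0 then -1/24 else (∑ k ∈ Nat.divisors d, (k : ℚ))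

/-- Substitution of t² into a formal power series over ℚ. -/
noncomputable def subSq (f : ℚ⟦X⟧) : ℚ⟦X⟧ :=
  PowerSeries.mk fun n => if 2 ∣ n then PowerSeries.coeff (n / 2) f else 0

/-- The formal power series ∏_{l ≥ 1} (1 - t^l)^{-24}, defined coefficientwise
(the n-th coefficient only depends on the factors with l ≤ n). -/
noncomputable def Q24 : ℚ⟦X⟧ :=
  PowerSeries.mk fun n =>
    PowerSeries.coeff n (∏ l ∈ Finset.Icc 1 n, ((1 - (PowerSeries.X : ℚ⟦X⟧) ^ l) ^ 24)⁻¹)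

namespace Stmt4Aux

open Finset

/-- sum of divisors, as a rational number -/
def sig (m : ℕ) : ℚ := ∑ k ∈ m.divisors, (k : ℚ)

/-- The set of quadruples (a,b,x,y) of positive naturals with a*x+b*y = n. -/
def Q (n : ℕ) : Finset (ℕ × ℕ × ℕ × ℕ) :=
  (Finset.Icc 1 n ×ˢ Finset.Icc 1 n ×ˢ Finset.Icc 1 n ×ˢ Finset.Icc 1 n).filter
    fun q => q.1 * q.2.2.1 + q.2.1 * q.2.2.2 = n

lemma mem_Q {n : ℕ} {q : ℕ × ℕ × ℕ × ℕ} :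
    q ∈ Q n ↔ 0 < q.1 ∧ 0 < q.2.1 ∧ 0 < q.2.2.1 ∧ 0 < q.2.2.2 ∧
      q.1 * q.2.2.1 + q.2.1 * q.2.2.2 = n := by
  obtain ⟨a, b, x, y⟩ := q
  simp only [Q, mem_filter, mem_product, mem_Icc]
  constructor
  · rintro ⟨⟨ha, hb, hx, hy⟩, he⟩
    exact ⟨ha.1, hb.1, hx.1, hy.1, he⟩
  · rintro ⟨ha, hb, hx, hy, he⟩
    have hax : a * x ≤ n := Nat.le.intro he
    have hby : b * y ≤ n := by rw [add_comm] at he; exact Nat.le.intro he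
    have h1 : a ≤ a * x := Nat.le_mul_of_pos_right a hx
    have h2 : x ≤ a * x := Nat.le_mul_of_pos_left x ha
    have h3 : b ≤ b * y := Nat.le_mul_of_pos_right b hy
    have h4 : y ≤ b * y := Nat.le_mul_of_pos_left y hb
    exact ⟨⟨⟨ha, le_trans h1 hax⟩, ⟨hb, le_trans h3 hby⟩, ⟨hx, le_trans h2 hax⟩,
      ⟨hy, le_trans h4 hby⟩⟩, he⟩

/-- swap symmetry -/
lemma swapQ (n : ℕ) (W : ℕ → ℕ → ℕ → ℕ → ℚ) :
    ∑ q ∈ Q n, W q.1 q.2.1 q.2.2.1 q.2.2.2 = ∑ q ∈ Q n, W q.2.1 q.1 q.2.2.2 q.2.2.1 := by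
  refine Finset.sum_nbij' (fun q => (q.2.1, q.1, q.2.2.2, q.2.2.1))
    (fun q => (q.2.1, q.1, q.2.2.2, q.2.2.1)) ?_ ?_ ?_ ?_ ?_
  · rintro ⟨a, b, x, y⟩ hq
    rw [mem_Q] at hq ⊢
    exact ⟨hq.2.1, hq.1, hq.2.2.2.1, hq.2.2.1, by rw [add_comm]; exact hq.2.2.2.2⟩
  · rintro ⟨a, b, x, y⟩ hq
    rw [mem_Q] at hq ⊢
    exact ⟨hq.2.1, hq.1, hq.2.2.2.1, hq.2.2.1, by rw [add_comm]; exact hq.2.2.2.2⟩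
  · rintro ⟨a, b, x, y⟩ _; rfl
  · rintro ⟨a, b, x, y⟩ _; rfl
  · rintro ⟨a, b, x, y⟩ _; rfl

/-- the fundamental Liouville bijection {b<a} ≃ {x<y} -/
lemma phi1 (n : ℕ) (W : ℕ → ℕ → ℕ → ℕ → ℚ) :
    ∑ q ∈ Q n, (if q.2.1 < q.1 then W (q.1 - q.2.1) q.2.1 q.2.2.1 (q.2.2.1 + q.2.2.2) else 0)
      = ∑ q ∈ Q n, (if q.2.2.1 < q.2.2.2 then W q.1 q.2.1 q.2.2.1 q.2.2.2 else 0) := by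
  rw [← Finset.sum_filter, ← Finset.sum_filter]
  refine Finset.sum_nbij' (fun q => (q.1 - q.2.1, q.2.1, q.2.2.1, q.2.2.1 + q.2.2.2))
    (fun q => (q.1 + q.2.1, q.2.1, q.2.2.1, q.2.2.2 - q.2.2.1)) ?_ ?_ ?_ ?_ ?_
  · rintro ⟨a, b, x, y⟩ hq
    simp only [mem_filter, mem_Q] at hq ⊢
    obtain ⟨⟨ha, hb, hx, hy, he⟩, hlt⟩ := hq
    have h3 : b * x ≤ a * x := Nat.mul_le_mul_right x (le_of_lt hlt)
    refine ⟨⟨by omega, hb, hx, by omega, ?_⟩, by omega⟩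
    rw [Nat.sub_mul, Nat.mul_add, ← add_assoc, Nat.sub_add_cancel h3]
    exact he
  · rintro ⟨a, b, x, y⟩ hq
    simp only [mem_filter, mem_Q] at hq ⊢
    obtain ⟨⟨ha, hb, hx, hy, he⟩, hlt⟩ := hq
    have h3 : b * x ≤ b * y := Nat.mul_le_mul_left b (le_of_lt hlt)
    refine ⟨⟨by omega, hb, hx, by omega, ?_⟩, by omega⟩
    rw [Nat.add_mul, Nat.mul_sub, add_assoc, Nat.add_sub_cancel' h3]
    exact he
  · rintro ⟨a, b, x, y⟩ hq
    simp only [mem_filter, mem_Q] at hq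
    simp only [Prod.mk.injEq]
    exact ⟨by omega, by trivial, by trivial, by omega⟩
  · rintro ⟨a, b, x, y⟩ hq
    simp only [mem_filter, mem_Q] at hq
    simp only [Prod.mk.injEq]
    exact ⟨by omega, by trivial, by trivial, by omega⟩
  · rintro ⟨a, b, x, y⟩ _; rfl

/-- the mirrored Liouville bijection {a<b} ≃ {y<x} -/
lemma phi2 (n : ℕ) (W : ℕ → ℕ → ℕ → ℕ → ℚ) :
    ∑ q ∈ Q n, (if q.1 < q.2.1 then W q.1 (q.2.1 - q.1) (q.2.2.1 + q.2.2.2) q.2.2.2 else 0)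
      = ∑ q ∈ Q n, (if q.2.2.2 < q.2.2.1 then W q.1 q.2.1 q.2.2.1 q.2.2.2 else 0) := by
  rw [← Finset.sum_filter, ← Finset.sum_filter]
  refine Finset.sum_nbij' (fun q => (q.1, q.2.1 - q.1, q.2.2.1 + q.2.2.2, q.2.2.2))
    (fun q => (q.1, q.2.1 + q.1, q.2.2.1 - q.2.2.2, q.2.2.2)) ?_ ?_ ?_ ?_ ?_
  · rintro ⟨a, b, x, y⟩ hq
    simp only [mem_filter, mem_Q] at hq ⊢
    obtain ⟨⟨ha, hb, hx, hy, he⟩, hlt⟩ := hq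
    have h3 : a * y ≤ b * y := Nat.mul_le_mul_right y (le_of_lt hlt)
    refine ⟨⟨ha, by omega, by omega, hy, ?_⟩, by omega⟩
    rw [Nat.mul_add, Nat.sub_mul, add_assoc, Nat.add_sub_cancel' h3]
    exact he
  · rintro ⟨a, b, x, y⟩ hq
    simp only [mem_filter, mem_Q] at hq ⊢
    obtain ⟨⟨ha, hb, hx, hy, he⟩, hlt⟩ := hq
    have h3 : a * y ≤ a * x := Nat.mul_le_mul_left a (le_of_lt hlt)
    refine ⟨⟨ha, by omega, by omega, hy, ?_⟩, by omega⟩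
    rw [Nat.add_mul, Nat.mul_sub, add_comm (b * y) (a * y), ← add_assoc,
      Nat.sub_add_cancel h3]
    exact he
  · rintro ⟨a, b, x, y⟩ hq
    simp only [mem_filter, mem_Q] at hq
    simp only [Prod.mk.injEq]
    exact ⟨by trivial, by omega, by omega, by trivial⟩
  · rintro ⟨a, b, x, y⟩ hq
    simp only [mem_filter, mem_Q] at hq
    simp only [Prod.mk.injEq]
    exact ⟨by trivial, by omega, by omega, by trivial⟩
  · rintro ⟨a, b, x, y⟩ _; rfl

/-- doubling bijection: {2 ∣ x} ≃ {2 ∣ a} -/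
lemma dbl (n : ℕ) (W : ℕ → ℕ → ℕ → ℕ → ℚ) :
    ∑ q ∈ Q n, (if 2 ∣ q.2.2.1 then W (2 * q.1) q.2.1 (q.2.2.1 / 2) q.2.2.2 else 0)
      = ∑ q ∈ Q n, (if 2 ∣ q.1 then W q.1 q.2.1 q.2.2.1 q.2.2.2 else 0) := by
  rw [← Finset.sum_filter, ← Finset.sum_filter]
  refine Finset.sum_nbij' (fun q => (2 * q.1, q.2.1, q.2.2.1 / 2, q.2.2.2))
    (fun q => (q.1 / 2, q.2.1, 2 * q.2.2.1, q.2.2.2)) ?_ ?_ ?_ ?_ ?_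
  · rintro ⟨a, b, x, y⟩ hq
    simp only [mem_filter, mem_Q] at hq ⊢
    obtain ⟨⟨ha, hb, hx, hy, he⟩, hdvd⟩ := hq
    have h2 : 2 * a * (x / 2) = a * x := by
      rw [mul_comm 2 a, mul_assoc, Nat.mul_div_cancel' hdvd]
    refine ⟨⟨by omega, hb, by omega, hy, by rw [h2]; exact he⟩, ⟨a, rfl⟩⟩
  · rintro ⟨a, b, x, y⟩ hq
    simp only [mem_filter, mem_Q] at hq ⊢
    obtain ⟨⟨ha, hb, hx, hy, he⟩, hdvd⟩ := hq
    have h2 : a / 2 * (2 * x) = a * x := by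
      rw [← mul_assoc, mul_comm (a / 2) 2, Nat.mul_div_cancel' hdvd]
    refine ⟨⟨by omega, hb, by omega, hy, by rw [h2]; exact he⟩, ⟨x, rfl⟩⟩
  · rintro ⟨a, b, x, y⟩ hq
    simp only [mem_filter, mem_Q] at hq
    obtain ⟨-, hdvd⟩ := hq
    simp only [Prod.mk.injEq]
    exact ⟨by omega, by trivial, by omega, by trivial⟩
  · rintro ⟨a, b, x, y⟩ hq
    simp only [mem_filter, mem_Q] at hq
    obtain ⟨-, hdvd⟩ := hq
    simp only [Prod.mk.injEq]
    exact ⟨by omega, by trivial, by omega, by trivial⟩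
  · rintro ⟨a, b, x, y⟩ _; rfl

/-- halving bijection: {(a,b,x,y) ∈ Q n : 2 ∣ a, 2 ∣ b} ≃ Q (n/2) for even n -/
lemma halfQ (n : ℕ) (hn : 2 ∣ n) (W : ℕ → ℕ → ℕ → ℕ → ℚ) :
    ∑ q ∈ Q n, (if 2 ∣ q.1 ∧ 2 ∣ q.2.1 then W (q.1 / 2) (q.2.1 / 2) q.2.2.1 q.2.2.2 else 0)
      = ∑ q ∈ Q (n / 2), W q.1 q.2.1 q.2.2.1 q.2.2.2 := by
  rw [← Finset.sum_filter]
  refine Finset.sum_nbij' (fun q => (q.1 / 2, q.2.1 / 2, q.2.2.1, q.2.2.2))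
    (fun q => (2 * q.1, 2 * q.2.1, q.2.2.1, q.2.2.2)) ?_ ?_ ?_ ?_ ?_
  · rintro ⟨a, b, x, y⟩ hq
    simp only [mem_filter, mem_Q] at hq ⊢
    obtain ⟨⟨ha, hb, hx, hy, he⟩, hda, hdb⟩ := hq
    refine ⟨by omega, by omega, hx, hy, ?_⟩
    have h2 : 2 * (a / 2 * x + b / 2 * y) = n := by
      rw [Nat.mul_add, ← mul_assoc, ← mul_assoc, Nat.mul_div_cancel' hda,
        Nat.mul_div_cancel' hdb]
      exact he
    omega
  · rintro ⟨a, b, x, y⟩ hq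
    simp only [mem_filter, mem_Q] at hq ⊢
    obtain ⟨ha, hb, hx, hy, he⟩ := hq
    refine ⟨⟨by omega, by omega, hx, hy, ?_⟩, ⟨a, rfl⟩, ⟨b, rfl⟩⟩
    have h2 : 2 * a * x + 2 * b * y = 2 * (a * x + b * y) := by ring
    rw [h2, he]
    omega
  · rintro ⟨a, b, x, y⟩ hq
    simp only [mem_filter, mem_Q] at hq
    obtain ⟨-, hda, hdb⟩ := hq
    have h1 : 2 * (a / 2) = a := by omega
    have h2 : 2 * (b / 2) = b := by omega
    simp [Prod.mk.injEq, h1, h2]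
  · rintro ⟨a, b, x, y⟩ _
    have h1 : 2 * a / 2 = a := by omega
    have h2 : 2 * b / 2 = b := by omega
    simp [Prod.mk.injEq, h1, h2]
  · rintro ⟨a, b, x, y⟩ _; rfl

lemma bdA (n : ℕ) (W : ℕ → ℕ → ℕ → ℚ) :
    ∑ q ∈ Q n, (if q.1 = q.2.1 then W q.1 q.2.2.1 q.2.2.2 else 0)
      = ∑ d ∈ n.divisors, ∑ x ∈ Ico 1 (n / d), W d x (n / d - x) := by
  rw [← Finset.sum_filter]
  have hmaps : ∀ q ∈ (Q n).filter (fun q => q.1 = q.2.1), q.1 ∈ n.divisors := by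
    rintro ⟨a, b, x, y⟩ hq
    simp only [mem_filter, mem_Q] at hq
    obtain ⟨⟨ha, hb, hx, hy, he⟩, hab⟩ := hq
    have he' : a * (x + y) = n := by rw [Nat.mul_add]; rw [← hab] at he; exact he
    have hax : 0 < a * x := Nat.mul_pos ha hx
    exact Nat.mem_divisors.2 ⟨⟨x + y, he'.symm⟩, by omega⟩
  rw [← Finset.sum_fiberwise_of_maps_to hmaps (fun q => W q.1 q.2.2.1 q.2.2.2)]
  refine Finset.sum_congr rfl fun d hd => ?_
  have hd0 : 0 < d := Nat.pos_of_mem_divisors hd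
  obtain ⟨hdvd, hn0⟩ := Nat.mem_divisors.1 hd
  refine Finset.sum_nbij' (fun q => q.2.2.1) (fun x => (d, d, x, n / d - x)) ?_ ?_ ?_ ?_ ?_
  · rintro ⟨a, b, x, y⟩ hq
    simp only [mem_filter, mem_Q] at hq
    obtain ⟨⟨⟨ha, hb, hx, hy, he⟩, hab⟩, had⟩ := hq
    subst had
    rw [← hab] at he
    have he' : a * (x + y) = n := by rw [Nat.mul_add]; exact he
    have hnd : n / a = x + y := by rw [← he', Nat.mul_div_cancel_left _ ha]
    simp only [mem_Ico]
    omega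
  · intro x hx
    simp only [mem_Ico] at hx
    have hxy : x + (n / d - x) = n / d := by omega
    simp only [mem_filter, mem_Q]
    refine ⟨⟨⟨hd0, hd0, by omega, by omega, ?_⟩, by trivial⟩, by trivial⟩
    rw [← Nat.mul_add, hxy, Nat.mul_div_cancel' hdvd]
  · rintro ⟨a, b, x, y⟩ hq
    simp only [mem_filter, mem_Q] at hq
    obtain ⟨⟨⟨ha, hb, hx, hy, he⟩, hab⟩, had⟩ := hq
    subst had
    rw [← hab] at he
    have he' : a * (x + y) = n := by rw [Nat.mul_add]; exact he
    have hnd : n / a = x + y := by rw [← he', Nat.mul_div_cancel_left _ ha]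
    have h4 : n / a - x = y := by omega
    simp [Prod.mk.injEq, hab.symm, h4]
  · intro x hx; rfl
  · rintro ⟨a, b, x, y⟩ hq
    simp only [mem_filter, mem_Q] at hq
    obtain ⟨⟨⟨ha, hb, hx, hy, he⟩, hab⟩, had⟩ := hq
    subst had
    rw [← hab] at he
    have he' : a * (x + y) = n := by rw [Nat.mul_add]; exact he
    have hnd : n / a = x + y := by rw [← he', Nat.mul_div_cancel_left _ ha]
    have h4 : n / a - x = y := by omega
    rw [h4]

lemma bdX (n : ℕ) (W : ℕ → ℕ → ℕ → ℚ) :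
    ∑ q ∈ Q n, (if q.2.2.1 = q.2.2.2 then W q.1 q.2.1 q.2.2.1 else 0)
      = ∑ d ∈ n.divisors, ∑ a ∈ Ico 1 d, W a (d - a) (n / d) := by
  rw [← Finset.sum_filter]
  have hmaps : ∀ q ∈ (Q n).filter (fun q => q.2.2.1 = q.2.2.2),
      q.1 + q.2.1 ∈ n.divisors := by
    rintro ⟨a, b, x, y⟩ hq
    simp only [mem_filter, mem_Q] at hq
    obtain ⟨⟨ha, hb, hx, hy, he⟩, hxy⟩ := hq
    have he' : (a + b) * x = n := by rw [Nat.add_mul]; rw [← hxy] at he; exact he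
    have hax : 0 < a * x := Nat.mul_pos ha hx
    exact Nat.mem_divisors.2 ⟨⟨x, he'.symm⟩, by omega⟩
  rw [← Finset.sum_fiberwise_of_maps_to hmaps (fun q => W q.1 q.2.1 q.2.2.1)]
  refine Finset.sum_congr rfl fun d hd => ?_
  have hd0 : 0 < d := Nat.pos_of_mem_divisors hd
  obtain ⟨hdvd, hn0⟩ := Nat.mem_divisors.1 hd
  refine Finset.sum_nbij' (fun q => q.1) (fun a => (a, d - a, n / d, n / d)) ?_ ?_ ?_ ?_ ?_
  · rintro ⟨a, b, x, y⟩ hq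
    simp only [mem_filter, mem_Q] at hq
    obtain ⟨⟨⟨ha, hb, hx, hy, he⟩, hxy⟩, had⟩ := hq
    simp only [mem_Ico]
    omega
  · intro a ha
    simp only [mem_Ico] at ha
    have hnd0 : 0 < n / d := Nat.div_pos (Nat.le_of_dvd (by omega) hdvd) hd0
    simp only [mem_filter, mem_Q]
    refine ⟨⟨⟨by omega, by omega, hnd0, hnd0, ?_⟩, by trivial⟩, by omega⟩
    rw [← Nat.add_mul]
    have : a + (d - a) = d := by omega
    rw [this, Nat.mul_div_cancel' hdvd]
  · rintro ⟨a, b, x, y⟩ hq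
    simp only [mem_filter, mem_Q] at hq
    obtain ⟨⟨⟨ha, hb, hx, hy, he⟩, hxy⟩, had⟩ := hq
    rw [← hxy] at he
    have he' : (a + b) * x = n := by rw [Nat.add_mul]; exact he
    have hab0 : 0 < a + b := by omega
    have hnd : n / (a + b) = x := by rw [← he', Nat.mul_div_cancel_left _ hab0]
    have h2 : d - a = b := by omega
    have h3 : n / d = x := by rw [← had]; exact hnd
    simp [Prod.mk.injEq, h2, h3, hxy.symm]
  · intro a ha; rfl
  · rintro ⟨a, b, x, y⟩ hq
    simp only [mem_filter, mem_Q] at hq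
    obtain ⟨⟨⟨ha, hb, hx, hy, he⟩, hxy⟩, had⟩ := hq
    rw [← hxy] at he
    have he' : (a + b) * x = n := by rw [Nat.add_mul]; exact he
    have hab0 : 0 < a + b := by omega
    have hnd : n / (a + b) = x := by rw [← he', Nat.mul_div_cancel_left _ hab0]
    have h2 : d - a = b := by omega
    have h3 : n / d = x := by rw [← had]; exact hnd
    rw [h2, h3]

lemma glue (n : ℕ) (u v : ℕ → ℕ → ℚ) :
    ∑ p ∈ antidiagonal n,
        (∑ a ∈ p.1.divisors, u a (p.1 / a)) * (∑ b ∈ p.2.divisors, v b (p.2 / b))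
      = ∑ q ∈ Q n, u q.1 q.2.2.1 * v q.2.1 q.2.2.2 := by
  have hmaps : ∀ q ∈ Q n, (q.1 * q.2.2.1, q.2.1 * q.2.2.2) ∈ antidiagonal n := by
    intro q hq
    rw [mem_Q] at hq
    simpa [Finset.mem_antidiagonal] using hq.2.2.2.2
  rw [← Finset.sum_fiberwise_of_maps_to hmaps (fun q => u q.1 q.2.2.1 * v q.2.1 q.2.2.2)]
  refine Finset.sum_congr rfl fun p hp => ?_
  obtain ⟨i, j⟩ := p
  rw [Finset.HasAntidiagonal.mem_antidiagonal] at hp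
  rw [Finset.sum_mul_sum, ← Finset.sum_product']
  refine Finset.sum_nbij' (fun r => (r.1, r.2, i / r.1, j / r.2))
    (fun q => (q.1, q.2.1)) ?_ ?_ ?_ ?_ ?_
  · rintro ⟨a, b⟩ hr
    simp only [mem_product, Nat.mem_divisors] at hr
    obtain ⟨⟨hai, hi0⟩, ⟨hbj, hj0⟩⟩ := hr
    have ha : 0 < a := Nat.pos_of_dvd_of_pos hai (Nat.pos_of_ne_zero hi0)
    have hb : 0 < b := Nat.pos_of_dvd_of_pos hbj (Nat.pos_of_ne_zero hj0)
    simp only [mem_filter, mem_Q]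
    have h1 : a * (i / a) = i := Nat.mul_div_cancel' hai
    have h2 : b * (j / b) = j := Nat.mul_div_cancel' hbj
    refine ⟨⟨ha, hb, Nat.div_pos (Nat.le_of_dvd (Nat.pos_of_ne_zero hi0) hai) ha,
      Nat.div_pos (Nat.le_of_dvd (Nat.pos_of_ne_zero hj0) hbj) hb, by rw [h1, h2]; exact hp⟩, ?_⟩
    simp [Prod.mk.injEq, h1, h2]
  · rintro ⟨a, b, x, y⟩ hq
    simp only [mem_filter, mem_Q, Prod.mk.injEq] at hq
    obtain ⟨⟨ha, hb, hx, hy, he⟩, hax, hby⟩ := hq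
    simp only [mem_product, Nat.mem_divisors]
    have hax0 : 0 < a * x := Nat.mul_pos ha hx
    have hby0 : 0 < b * y := Nat.mul_pos hb hy
    exact ⟨⟨by rw [← hax]; exact Dvd.intro x rfl, by omega⟩,
      ⟨by rw [← hby]; exact Dvd.intro y rfl, by omega⟩⟩
  · rintro ⟨a, b⟩ _; rfl
  · rintro ⟨a, b, x, y⟩ hq
    simp only [mem_filter, mem_Q, Prod.mk.injEq] at hq
    obtain ⟨⟨ha, hb, hx, hy, he⟩, hax, hby⟩ := hq
    have h1 : i / a = x := by rw [← hax, Nat.mul_div_cancel_left _ ha]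
    have h2 : j / b = y := by rw [← hby, Nat.mul_div_cancel_left _ hb]
    simp [Prod.mk.injEq, h1, h2]
  · rintro ⟨a, b⟩ _; rfl

/-- Liouville's first identity -/
theorem master (f : ℕ → ℚ) (n : ℕ) :
    ∑ q ∈ Q n, ((if q.2.1 < q.1 then f (q.1 - q.2.1) else 0)
        + (if q.1 < q.2.1 then f (q.2.1 - q.1) else 0)
        + (if q.1 = q.2.1 then f 0 else 0) - f (q.1 + q.2.1))
      = f 0 * ∑ d ∈ n.divisors, ((n / d : ℕ) - 1 : ℚ)
        + 2 * ∑ d ∈ n.divisors, ((n / d : ℕ) - 1 : ℚ) * f d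
        - 2 * ∑ d ∈ n.divisors, ∑ a ∈ Ico 1 d, f a
        - ∑ d ∈ n.divisors, ((d : ℕ) - 1 : ℚ) * f d := by
  have h1 : ∑ q ∈ Q n, (if q.2.1 < q.1 then f (q.1 - q.2.1) else 0)
      = ∑ q ∈ Q n, (if q.2.2.1 < q.2.2.2 then f q.1 else 0) :=
    phi1 n fun a _ _ _ => f a
  have h2 : ∑ q ∈ Q n, (if q.1 < q.2.1 then f (q.2.1 - q.1) else 0)
      = ∑ q ∈ Q n, (if q.2.2.2 < q.2.2.1 then f q.2.1 else 0) := by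
    have := phi2 n fun _ b _ _ => f b
    simpa using this
  have h4 : ∑ q ∈ Q n, (if q.2.2.1 < q.2.2.2 then f (q.1 + q.2.1) else 0)
      = ∑ q ∈ Q n, (if q.2.1 < q.1 then f q.1 else 0) := by
    rw [← phi1 n fun a b _ _ => f (a + b)]
    refine Finset.sum_congr rfl fun q hq => ?_
    split_ifs with h
    · congr 1
      omega
    · rfl
  have h5 : ∑ q ∈ Q n, (if q.2.2.2 < q.2.2.1 then f (q.1 + q.2.1) else 0)
      = ∑ q ∈ Q n, (if q.1 < q.2.1 then f q.2.1 else 0) := by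
    rw [← phi2 n fun a b _ _ => f (a + b)]
    refine Finset.sum_congr rfl fun q hq => ?_
    split_ifs with h
    · congr 1
      omega
    · rfl
  have h6 : ∑ q ∈ Q n, (if q.1 < q.2.1 then f q.1 else 0)
      = ∑ q ∈ Q n, (if q.2.2.2 < q.2.2.1 then f q.1 else 0) :=
    phi2 n fun a _ _ _ => f a
  have h7 : ∑ q ∈ Q n, (if q.2.2.2 < q.2.2.1 then f q.2.1 else 0)
      = ∑ q ∈ Q n, (if q.2.2.1 < q.2.2.2 then f q.1 else 0) :=
    swapQ n fun a b x y => if y < x then f b else 0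
  have h8 : ∑ q ∈ Q n, (if q.1 < q.2.1 then f q.2.1 else 0)
      = ∑ q ∈ Q n, (if q.2.1 < q.1 then f q.1 else 0) :=
    swapQ n fun a b _ _ => if a < b then f b else 0
  have htriA : ∑ q ∈ Q n, f (q.1 + q.2.1)
      = ∑ q ∈ Q n, (if q.2.2.1 < q.2.2.2 then f (q.1 + q.2.1) else 0)
        + ∑ q ∈ Q n, (if q.2.2.2 < q.2.2.1 then f (q.1 + q.2.1) else 0)
        + ∑ q ∈ Q n, (if q.2.2.1 = q.2.2.2 then f (q.1 + q.2.1) else 0) := by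
    rw [← Finset.sum_add_distrib, ← Finset.sum_add_distrib]
    refine Finset.sum_congr rfl fun q _ => ?_
    rcases lt_trichotomy q.2.2.1 q.2.2.2 with h | h | h
    · rw [if_pos h, if_neg (by omega), if_neg (by omega)]; ring
    · rw [if_neg (by omega), if_neg (by omega), if_pos h]; ring
    · rw [if_neg (by omega), if_pos h, if_neg (by omega)]; ring
  have htriA2 : ∑ q ∈ Q n, f q.1
      = ∑ q ∈ Q n, (if q.2.1 < q.1 then f q.1 else 0)
        + ∑ q ∈ Q n, (if q.1 < q.2.1 then f q.1 else 0)
        + ∑ q ∈ Q n, (if q.1 = q.2.1 then f q.1 else 0) := by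
    rw [← Finset.sum_add_distrib, ← Finset.sum_add_distrib]
    refine Finset.sum_congr rfl fun q _ => ?_
    rcases lt_trichotomy q.2.1 q.1 with h | h | h
    · rw [if_pos h, if_neg (by omega), if_neg (by omega)]; ring
    · rw [if_neg (by omega), if_neg (by omega), if_pos h.symm]; ring
    · rw [if_neg (by omega), if_pos h, if_neg (by omega)]; ring
  have htriX2 : ∑ q ∈ Q n, f q.1
      = ∑ q ∈ Q n, (if q.2.2.1 < q.2.2.2 then f q.1 else 0)
        + ∑ q ∈ Q n, (if q.2.2.2 < q.2.2.1 then f q.1 else 0)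
        + ∑ q ∈ Q n, (if q.2.2.1 = q.2.2.2 then f q.1 else 0) := by
    rw [← Finset.sum_add_distrib, ← Finset.sum_add_distrib]
    refine Finset.sum_congr rfl fun q _ => ?_
    rcases lt_trichotomy q.2.2.1 q.2.2.2 with h | h | h
    · rw [if_pos h, if_neg (by omega), if_neg (by omega)]; ring
    · rw [if_neg (by omega), if_neg (by omega), if_pos h]; ring
    · rw [if_neg (by omega), if_pos h, if_neg (by omega)]; ring
  have hdiv1 : ∀ d ∈ n.divisors, 1 ≤ n / d := by
    intro d hd
    obtain ⟨hdvd, hn0⟩ := Nat.mem_divisors.1 hd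
    exact Nat.one_le_div_iff (Nat.pos_of_mem_divisors hd) |>.2
      (Nat.le_of_dvd (Nat.pos_of_ne_zero hn0) hdvd)
  have hbd0 : ∑ q ∈ Q n, (if q.1 = q.2.1 then f 0 else 0)
      = f 0 * ∑ d ∈ n.divisors, ((n / d : ℕ) - 1 : ℚ) := by
    rw [bdA n fun _ _ _ => f 0, Finset.mul_sum]
    refine Finset.sum_congr rfl fun d hd => ?_
    rw [Finset.sum_const, Nat.card_Ico, nsmul_eq_mul, mul_comm]
    have := hdiv1 d hd
    congr 1
    push_cast [Nat.cast_sub this]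
    ring
  have hbd1 : ∑ q ∈ Q n, (if q.1 = q.2.1 then f q.1 else 0)
      = ∑ d ∈ n.divisors, ((n / d : ℕ) - 1 : ℚ) * f d := by
    rw [bdA n fun d _ _ => f d]
    refine Finset.sum_congr rfl fun d hd => ?_
    rw [Finset.sum_const, Nat.card_Ico, nsmul_eq_mul]
    have := hdiv1 d hd
    congr 1
    push_cast [Nat.cast_sub this]
    ring
  have hbd2 : ∑ q ∈ Q n, (if q.2.2.1 = q.2.2.2 then f (q.1 + q.2.1) else 0)
      = ∑ d ∈ n.divisors, ((d : ℕ) - 1 : ℚ) * f d := by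
    rw [bdX n fun a b _ => f (a + b)]
    refine Finset.sum_congr rfl fun d hd => ?_
    have hstep : ∀ a ∈ Ico 1 d, f (a + (d - a)) = f d := by
      intro a ha
      rw [mem_Ico] at ha
      congr 1
      omega
    rw [Finset.sum_congr rfl hstep, Finset.sum_const, Nat.card_Ico, nsmul_eq_mul]
    have hd1 : 1 ≤ d := Nat.pos_of_mem_divisors hd
    congr 1
    push_cast [Nat.cast_sub hd1]
    ring
  have hbd3 : ∑ q ∈ Q n, (if q.2.2.1 = q.2.2.2 then f q.1 else 0)
      = ∑ d ∈ n.divisors, ∑ a ∈ Ico 1 d, f a := by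
    rw [bdX n fun a _ _ => f a]
  rw [Finset.sum_sub_distrib, Finset.sum_add_distrib, Finset.sum_add_distrib]
  linarith [h1, h2, h4, h5, h6, h7, h8, htriA, htriA2, htriX2, hbd0, hbd1, hbd2, hbd3]

/-! ### Polynomial sums and divisor sums -/

lemma sum_sq (d : ℕ) : ∑ a ∈ range d, (a : ℚ) ^ 2
    = (2 * (d : ℚ) ^ 3 - 3 * (d : ℚ) ^ 2 + d) / 6 := by
  induction d with
  | zero => simp
  | succ k ih =>
    rw [Finset.sum_range_succ, ih]
    push_cast
    ring

lemma sum_sq_even (d : ℕ) : ∑ a ∈ range d, (if 2 ∣ a then (a : ℚ) ^ 2 else 0)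
    = ((d : ℚ) ^ 3 - 3 * (d : ℚ) ^ 2 + 2 * d) / 6
      + (if 2 ∣ d then 0 else ((d : ℚ) ^ 2 - d) / 2) := by
  induction d with
  | zero => norm_num
  | succ k ih =>
    rw [Finset.sum_range_succ, ih]
    by_cases h : 2 ∣ k
    · rw [if_pos h, if_pos h, if_neg (by omega)]
      push_cast
      ring
    · rw [if_neg h, if_neg h, if_pos (by omega)]
      push_cast
      ring

lemma Ico_sum (g : ℕ → ℚ) (hg : g 0 = 0) (d : ℕ) :
    ∑ a ∈ Ico 1 d, g a = ∑ a ∈ range d, g a := by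
  rcases Nat.eq_zero_or_pos d with rfl | hd
  · simp
  · rw [Finset.range_eq_Ico, Finset.sum_eq_sum_Ico_succ_bot hd, hg, zero_add]

lemma div_even_sum (m : ℕ) (hm : 2 ∣ m) (g : ℕ → ℚ) :
    ∑ d ∈ m.divisors, (if 2 ∣ d then g d else 0) = ∑ e ∈ (m / 2).divisors, g (2 * e) := by
  rcases Nat.eq_zero_or_pos m with rfl | hm0
  · simp
  rw [← Finset.sum_filter]
  refine Finset.sum_nbij' (fun d => d / 2) (fun e => 2 * e) ?_ ?_ ?_ ?_ ?_
  · intro d hd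
    simp only [mem_filter, Nat.mem_divisors] at hd ⊢
    obtain ⟨⟨hdvd, h0⟩, h2⟩ := hd
    obtain ⟨d', rfl⟩ := h2
    obtain ⟨c, hc⟩ := hdvd
    have hc2 : 2 * d' * c = 2 * (d' * c) := by ring
    rw [hc2] at hc
    exact ⟨⟨c, by rw [show 2 * d' / 2 = d' by omega]; omega⟩, by omega⟩
  · intro e he
    simp only [mem_filter, Nat.mem_divisors] at he ⊢
    obtain ⟨hdvd, h0⟩ := he
    obtain ⟨c, hc⟩ := hdvd
    have h2 : 2 * e * c = 2 * (e * c) := by ring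
    refine ⟨⟨⟨c, by rw [h2]; omega⟩, by omega⟩, ⟨e, rfl⟩⟩
  · intro d hd
    simp only [mem_filter, Nat.mem_divisors] at hd
    show 2 * (d / 2) = d
    omega
  · intro e he
    show 2 * e / 2 = e
    omega
  · intro d hd
    simp only [mem_filter, Nat.mem_divisors] at hd
    have : 2 * (d / 2) = d := by omega
    rw [this]

lemma div_odd_sum (m : ℕ) (hm : ¬ 2 ∣ m) (g : ℕ → ℚ) :
    ∑ d ∈ m.divisors, (if 2 ∣ d then g d else 0) = 0 := by
  refine Finset.sum_eq_zero fun d hd => ?_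
  rw [if_neg]
  intro h2
  exact hm (dvd_trans h2 (Nat.mem_divisors.1 hd).1)

/-! ### The basic convolution sums -/

/-- `Vs n = ∑_{ax+by=n} ab` -/
def Vs (n : ℕ) : ℚ := ∑ q ∈ Q n, (q.1 : ℚ) * q.2.1

/-- `Bs n = ∑_{ax+by=n, a ≡ b (2)} ab` -/
def Bs (n : ℕ) : ℚ := ∑ q ∈ Q n, (if 2 ∣ q.1 + q.2.1 then (q.1 : ℚ) * q.2.1 else 0)

/-- `Ms n = ∑_{ax+by=n, 2 ∣ a} ab` -/
def Ms (n : ℕ) : ℚ := ∑ q ∈ Q n, (if 2 ∣ q.1 then (q.1 : ℚ) * q.2.1 else 0)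

/-- `Es n = ∑_{ax+by=n, 2 ∣ a, 2 ∣ b} ab` -/
def Es (n : ℕ) : ℚ := ∑ q ∈ Q n, (if 2 ∣ q.1 ∧ 2 ∣ q.2.1 then (q.1 : ℚ) * q.2.1 else 0)

def D2 (m : ℕ) : ℚ := ∑ d ∈ m.divisors, (d : ℚ) ^ 2
def D3 (m : ℕ) : ℚ := ∑ d ∈ m.divisors, (d : ℚ) ^ 3
def E1 (m : ℕ) : ℚ := ∑ d ∈ m.divisors, (if 2 ∣ d then (d : ℚ) else 0)
def E2 (m : ℕ) : ℚ := ∑ d ∈ m.divisors, (if 2 ∣ d then (d : ℚ) ^ 2 else 0)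
def E3 (m : ℕ) : ℚ := ∑ d ∈ m.divisors, (if 2 ∣ d then (d : ℚ) ^ 3 else 0)

lemma cast_div_mul {m d : ℕ} (hd : d ∈ m.divisors) : ((m / d : ℕ) : ℚ) * (d : ℚ) = m := by
  rw [← Nat.cast_mul, Nat.div_mul_cancel (Nat.mem_divisors.1 hd).1]

lemma evalV (m : ℕ) : Vs m = (5 * D3 m + sig m - 6 * (m : ℚ) * sig m) / 12 := by
  have hm := master (fun u => (u : ℚ) ^ 2) m
  beta_reduce at hm
  have h00 : ((0 : ℕ) : ℚ) ^ 2 = 0 := by norm_num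
  rw [h00, zero_mul, zero_add] at hm
  have hL : ∑ q ∈ Q m, ((if q.2.1 < q.1 then ((q.1 - q.2.1 : ℕ) : ℚ) ^ 2 else 0)
      + (if q.1 < q.2.1 then ((q.2.1 - q.1 : ℕ) : ℚ) ^ 2 else 0)
      + (if q.1 = q.2.1 then (0 : ℚ) else 0) - ((q.1 + q.2.1 : ℕ) : ℚ) ^ 2)
      = -4 * Vs m := by
    rw [Vs, Finset.mul_sum]
    refine Finset.sum_congr rfl fun q hq => ?_
    rcases lt_trichotomy q.2.1 q.1 with h | h | h
    · rw [if_pos h, if_neg (by omega), if_neg (by omega), Nat.cast_sub h.le]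
      push_cast
      ring
    · rw [if_neg (by omega), if_neg (by omega), if_pos h.symm, h]
      push_cast
      ring
    · rw [if_neg (by omega), if_pos h, if_neg (by omega), Nat.cast_sub h.le]
      push_cast
      ring
  rw [hL] at hm
  have hR1 : ∑ d ∈ m.divisors, ((m / d : ℕ) - 1 : ℚ) * (d : ℚ) ^ 2
      = (m : ℚ) * sig m - D2 m := by
    have step : ∀ d ∈ m.divisors, ((m / d : ℕ) - 1 : ℚ) * (d : ℚ) ^ 2
        = (m : ℚ) * (d : ℚ) - (d : ℚ) ^ 2 := by
      intro d hd
      have hmd := cast_div_mul hd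
      linear_combination (d : ℚ) * hmd
    rw [Finset.sum_congr rfl step, Finset.sum_sub_distrib]
    congr 1
    rw [sig, Finset.mul_sum]
  have hR2 : ∑ d ∈ m.divisors, ∑ a ∈ Ico 1 d, (a : ℚ) ^ 2
      = (2 * D3 m - 3 * D2 m + sig m) / 6 := by
    have step : ∀ d ∈ m.divisors, ∑ a ∈ Ico 1 d, (a : ℚ) ^ 2
        = (2 * (d : ℚ) ^ 3 - 3 * (d : ℚ) ^ 2 + d) / 6 := by
      intro d _
      rw [Ico_sum (fun a => (a : ℚ) ^ 2) (by norm_num), sum_sq]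
    rw [Finset.sum_congr rfl step, ← Finset.sum_div]
    congr 1
    rw [Finset.sum_add_distrib, Finset.sum_sub_distrib, ← Finset.mul_sum, ← Finset.mul_sum]
    rfl
  have hR3 : ∑ d ∈ m.divisors, ((d : ℕ) - 1 : ℚ) * (d : ℚ) ^ 2 = D3 m - D2 m := by
    have step : ∀ d ∈ m.divisors, ((d : ℕ) - 1 : ℚ) * (d : ℚ) ^ 2
        = (d : ℚ) ^ 3 - (d : ℚ) ^ 2 := by
      intro d _
      ring
    rw [Finset.sum_congr rfl step, Finset.sum_sub_distrib]
    rfl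
  rw [hR1, hR2, hR3] at hm
  linarith [hm]

lemma evalB (m : ℕ) : -4 * Bs m
    = 2 * ((m : ℚ) * E1 m - E2 m)
      - 2 * ((D3 m - 3 * D2 m + 2 * sig m) / 6 + (D2 m - sig m) / 2 - (E2 m - E1 m) / 2)
      - (E3 m - E2 m) := by
  have hm := master (fun u => if 2 ∣ u then (u : ℚ) ^ 2 else 0) m
  beta_reduce at hm
  have h00 : (if 2 ∣ (0 : ℕ) then ((0 : ℕ) : ℚ) ^ 2 else 0) = 0 := by norm_num
  rw [h00, zero_mul, zero_add] at hm
  have hL : ∑ q ∈ Q m, ((if q.2.1 < q.1 then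
        (if 2 ∣ q.1 - q.2.1 then ((q.1 - q.2.1 : ℕ) : ℚ) ^ 2 else 0) else 0)
      + (if q.1 < q.2.1 then
        (if 2 ∣ q.2.1 - q.1 then ((q.2.1 - q.1 : ℕ) : ℚ) ^ 2 else 0) else 0)
      + (if q.1 = q.2.1 then (0 : ℚ) else 0)
      - (if 2 ∣ q.1 + q.2.1 then ((q.1 + q.2.1 : ℕ) : ℚ) ^ 2 else 0))
      = -4 * Bs m := by
    rw [Bs, Finset.mul_sum]
    refine Finset.sum_congr rfl fun q hq => ?_
    obtain ⟨a, b, x, y⟩ := q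
    simp only
    rcases lt_trichotomy b a with h | h | h
    · by_cases hp : 2 ∣ a + b
      · rw [if_pos h, if_pos (show 2 ∣ a - b by omega), if_neg (show ¬ a < b by omega),
          if_neg (show ¬ a = b by omega), if_pos hp, if_pos hp, Nat.cast_sub h.le]
        push_cast
        ring
      · rw [if_pos h, if_neg (show ¬ 2 ∣ a - b by omega), if_neg (show ¬ a < b by omega),
          if_neg (show ¬ a = b by omega), if_neg hp, if_neg hp]
        norm_num
    · subst h
      rw [if_neg (show ¬ b < b by omega),
        if_pos rfl, if_pos (show 2 ∣ b + b by omega), if_pos (show 2 ∣ b + b by omega)]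
      push_cast
      ring
    · by_cases hp : 2 ∣ a + b
      · rw [if_neg (show ¬ b < a by omega), if_pos h, if_pos (show 2 ∣ b - a by omega),
          if_neg (show ¬ a = b by omega), if_pos hp, if_pos hp, Nat.cast_sub h.le]
        push_cast
        ring
      · rw [if_neg (show ¬ b < a by omega), if_pos h, if_neg (show ¬ 2 ∣ b - a by omega),
          if_neg (show ¬ a = b by omega), if_neg hp, if_neg hp]
        norm_num

  rw [hL] at hm
  have hB1 : ∑ d ∈ m.divisors, ((m / d : ℕ) - 1 : ℚ) * (if 2 ∣ d then (d : ℚ) ^ 2 else 0)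
      = (m : ℚ) * E1 m - E2 m := by
    have step : ∀ d ∈ m.divisors, ((m / d : ℕ) - 1 : ℚ) * (if 2 ∣ d then (d : ℚ) ^ 2 else 0)
        = (if 2 ∣ d then (m : ℚ) * (d : ℚ) else 0) - (if 2 ∣ d then (d : ℚ) ^ 2 else 0) := by
      intro d hd
      have hmd := cast_div_mul hd
      split_ifs with h2
      · linear_combination (d : ℚ) * hmd
      · ring
    rw [Finset.sum_congr rfl step, Finset.sum_sub_distrib]
    congr 1
    rw [E1, Finset.mul_sum]
    refine Finset.sum_congr rfl fun d _ => ?_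
    rw [mul_ite, mul_zero]
  have hB2 : ∑ d ∈ m.divisors, ∑ a ∈ Ico 1 d, (if 2 ∣ a then (a : ℚ) ^ 2 else 0)
      = (D3 m - 3 * D2 m + 2 * sig m) / 6 + ((D2 m - sig m) / 2 - (E2 m - E1 m) / 2) := by
    have step : ∀ d ∈ m.divisors, ∑ a ∈ Ico 1 d, (if 2 ∣ a then (a : ℚ) ^ 2 else 0)
        = ((d : ℚ) ^ 3 - 3 * (d : ℚ) ^ 2 + 2 * d) / 6
          + (((d : ℚ) ^ 2 - d) / 2 - (if 2 ∣ d then ((d : ℚ) ^ 2 - d) / 2 else 0)) := by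
      intro d _
      rw [Ico_sum (fun a => if 2 ∣ a then (a : ℚ) ^ 2 else 0) (by norm_num), sum_sq_even]
      congr 1
      split_ifs <;> ring
    rw [Finset.sum_congr rfl step, Finset.sum_add_distrib]
    congr 1
    · rw [← Finset.sum_div]
      congr 1
      rw [Finset.sum_add_distrib, Finset.sum_sub_distrib, ← Finset.mul_sum, ← Finset.mul_sum]
      rfl
    · rw [Finset.sum_sub_distrib]
      congr 1
      · rw [← Finset.sum_div]
        congr 1
        rw [Finset.sum_sub_distrib]
        rfl
      · have step2 : ∀ d ∈ m.divisors, (if 2 ∣ d then ((d : ℚ) ^ 2 - d) / 2 else 0)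
            = ((if 2 ∣ d then (d : ℚ) ^ 2 else 0) - (if 2 ∣ d then (d : ℚ) else 0)) / 2 := by
          intro d _
          split_ifs <;> norm_num
        rw [Finset.sum_congr rfl step2, ← Finset.sum_div, Finset.sum_sub_distrib]
        rfl
  have hB3 : ∑ d ∈ m.divisors, ((d : ℕ) - 1 : ℚ) * (if 2 ∣ d then (d : ℚ) ^ 2 else 0)
      = E3 m - E2 m := by
    have step : ∀ d ∈ m.divisors, ((d : ℕ) - 1 : ℚ) * (if 2 ∣ d then (d : ℚ) ^ 2 else 0)
        = (if 2 ∣ d then (d : ℚ) ^ 3 else 0) - (if 2 ∣ d then (d : ℚ) ^ 2 else 0) := by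
      intro d _
      split_ifs <;> ring
    rw [Finset.sum_congr rfl step, Finset.sum_sub_distrib]
    rfl
  rw [hB1, hB2, hB3] at hm
  linarith [hm]

lemma relMBE (n : ℕ) : 2 * Ms n = Vs n - Bs n + 2 * Es n := by
  have hswap : ∑ q ∈ Q n, (if 2 ∣ q.1 then (q.1 : ℚ) * q.2.1 else 0)
      = ∑ q ∈ Q n, (if 2 ∣ q.2.1 then (q.2.1 : ℚ) * q.1 else 0) :=
    swapQ n fun a b _ _ => if 2 ∣ a then (a : ℚ) * b else 0
  rw [Ms, Vs, Bs, Es, two_mul, Finset.mul_sum]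
  nth_rewrite 2 [hswap]
  rw [← Finset.sum_add_distrib, ← Finset.sum_sub_distrib, ← Finset.sum_add_distrib]
  refine Finset.sum_congr rfl fun q hq => ?_
  obtain ⟨a, b, x, y⟩ := q
  simp only
  by_cases h1 : 2 ∣ a <;> by_cases h2 : 2 ∣ b
  · rw [if_pos h1, if_pos h2, if_pos (show 2 ∣ a + b by omega), if_pos ⟨h1, h2⟩]
    ring
  · rw [if_pos h1, if_neg h2, if_neg (show ¬ 2 ∣ a + b by omega),
      if_neg (show ¬ (2 ∣ a ∧ 2 ∣ b) from fun h => h2 h.2)]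
    ring
  · rw [if_neg h1, if_pos h2, if_neg (show ¬ 2 ∣ a + b by omega),
      if_neg (show ¬ (2 ∣ a ∧ 2 ∣ b) from fun h => h1 h.1)]
    ring
  · rw [if_neg h1, if_neg h2, if_pos (show 2 ∣ a + b by omega),
      if_neg (show ¬ (2 ∣ a ∧ 2 ∣ b) from fun h => h1 h.1)]
    ring

lemma EsEven (n : ℕ) (hn : 2 ∣ n) : Es n = 4 * Vs (n / 2) := by
  rw [Es]
  have step : ∀ q ∈ Q n, (if 2 ∣ q.1 ∧ 2 ∣ q.2.1 then (q.1 : ℚ) * q.2.1 else 0)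
      = (if 2 ∣ q.1 ∧ 2 ∣ q.2.1 then 4 * ((q.1 / 2 : ℕ) : ℚ) * ((q.2.1 / 2 : ℕ) : ℚ) else 0) := by
    intro q _
    split_ifs with h
    · obtain ⟨⟨c, hc⟩, ⟨d, hd⟩⟩ := h
      rw [hc, hd, show 2 * c / 2 = c by omega, show 2 * d / 2 = d by omega]
      push_cast
      ring
    · rfl
  rw [Finset.sum_congr rfl step]
  have hh := halfQ n hn (fun a b _ _ => 4 * (a : ℚ) * b)
  beta_reduce at hh
  rw [hh, Vs, Finset.mul_sum]
  refine Finset.sum_congr rfl fun q _ => ?_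
  ring

lemma EsOdd (n : ℕ) (hn : ¬ 2 ∣ n) : Es n = 0 := by
  rw [Es]
  refine Finset.sum_eq_zero fun q hq => ?_
  rw [mem_Q] at hq
  obtain ⟨ha, hb, hx, hy, he⟩ := hq
  rw [if_neg]
  rintro ⟨⟨c, hc⟩, ⟨d, hd⟩⟩
  apply hn
  rw [hc, hd] at he
  rw [show 2 * c * q.2.2.1 = 2 * (c * q.2.2.1) by ring,
    show 2 * d * q.2.2.2 = 2 * (d * q.2.2.2) by ring] at he
  exact ⟨c * q.2.2.1 + d * q.2.2.2, by omega⟩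

lemma conv2 (n : ℕ) : ∑ q ∈ Q n, (if 2 ∣ q.2.2.1 then (q.1 : ℚ) * q.2.1 else 0)
    = Ms n / 2 := by
  have hd := dbl n (fun a b _ _ => (a : ℚ) * b / 2)
  beta_reduce at hd
  have e1 : ∑ q ∈ Q n, (if 2 ∣ q.2.2.1 then (q.1 : ℚ) * q.2.1 else 0)
      = ∑ q ∈ Q n, (if 2 ∣ q.2.2.1 then ((2 * q.1 : ℕ) : ℚ) * q.2.1 / 2 else 0) := by
    refine Finset.sum_congr rfl fun q _ => ?_
    split_ifs
    · push_cast; ring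
    · rfl
  rw [e1, hd, Ms, Finset.sum_div]
  refine Finset.sum_congr rfl fun q _ => ?_
  split_ifs
  · rfl
  · norm_num

lemma conv1 (n : ℕ) : ∑ q ∈ Q n, (if 2 ∣ q.2.2.1 ∧ 2 ∣ q.2.2.2 then (q.1 : ℚ) * q.2.1 else 0)
    = Es n / 4 := by
  have hd1 := dbl n (fun a b _ y => if 2 ∣ y then (a : ℚ) * b / 2 else 0)
  beta_reduce at hd1
  have e1 : ∑ q ∈ Q n, (if 2 ∣ q.2.2.1 ∧ 2 ∣ q.2.2.2 then (q.1 : ℚ) * q.2.1 else 0)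
      = ∑ q ∈ Q n, (if 2 ∣ q.2.2.1 then (if 2 ∣ q.2.2.2 then ((2 * q.1 : ℕ) : ℚ) * q.2.1 / 2
          else 0) else 0) := by
    refine Finset.sum_congr rfl fun q _ => ?_
    by_cases h1 : 2 ∣ q.2.2.1 <;> by_cases h2 : 2 ∣ q.2.2.2 <;> simp [h1, h2] <;>
      (try (push_cast; ring))
  have e2 : ∑ q ∈ Q n, (if 2 ∣ q.1 then (if 2 ∣ q.2.2.2 then (q.1 : ℚ) * q.2.1 / 2 else 0) else 0)
      = ∑ q ∈ Q n, (if 2 ∣ q.1 ∧ 2 ∣ q.2.2.2 then (q.1 : ℚ) * q.2.1 / 2 else 0) := by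
    refine Finset.sum_congr rfl fun q _ => ?_
    by_cases h1 : 2 ∣ q.1 <;> by_cases h2 : 2 ∣ q.2.2.2 <;> simp [h1, h2]
  have hsw : ∑ q ∈ Q n, (if 2 ∣ q.1 ∧ 2 ∣ q.2.2.2 then (q.1 : ℚ) * q.2.1 / 2 else 0)
      = ∑ q ∈ Q n, (if 2 ∣ q.2.1 ∧ 2 ∣ q.2.2.1 then (q.2.1 : ℚ) * q.1 / 2 else 0) :=
    swapQ n fun a b _ y => if 2 ∣ a ∧ 2 ∣ y then (a : ℚ) * b / 2 else 0
  have hd2 := dbl n (fun a b _ _ => if 2 ∣ b then (a : ℚ) * b / 4 else 0)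
  beta_reduce at hd2
  have e3 : ∑ q ∈ Q n, (if 2 ∣ q.2.1 ∧ 2 ∣ q.2.2.1 then (q.2.1 : ℚ) * q.1 / 2 else 0)
      = ∑ q ∈ Q n, (if 2 ∣ q.2.2.1 then (if 2 ∣ q.2.1 then ((2 * q.1 : ℕ) : ℚ) * q.2.1 / 4
          else 0) else 0) := by
    refine Finset.sum_congr rfl fun q _ => ?_
    by_cases h1 : 2 ∣ q.2.1 <;> by_cases h2 : 2 ∣ q.2.2.1 <;> simp [h1, h2] <;>
      (try (push_cast; ring))
  have e4 : ∑ q ∈ Q n, (if 2 ∣ q.1 then (if 2 ∣ q.2.1 then (q.1 : ℚ) * q.2.1 / 4 else 0) else 0)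
      = Es n / 4 := by
    rw [Es, Finset.sum_div]
    refine Finset.sum_congr rfl fun q _ => ?_
    by_cases h1 : 2 ∣ q.1 <;> by_cases h2 : 2 ∣ q.2.1 <;> simp [h1, h2]
  rw [e1, hd1, e2, hsw, e3, hd2, e4]

lemma E1Even (n : ℕ) (hn : 2 ∣ n) : E1 n = 2 * sig (n / 2) := by
  rw [E1, div_even_sum n hn, sig, Finset.mul_sum]
  refine Finset.sum_congr rfl fun e _ => ?_
  push_cast
  ring

lemma E2Even (n : ℕ) (hn : 2 ∣ n) : E2 n = 4 * D2 (n / 2) := by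
  rw [E2, div_even_sum n hn, D2, Finset.mul_sum]
  refine Finset.sum_congr rfl fun e _ => ?_
  push_cast
  ring

lemma E3Even (n : ℕ) (hn : 2 ∣ n) : E3 n = 8 * D3 (n / 2) := by
  rw [E3, div_even_sum n hn, D3, Finset.mul_sum]
  refine Finset.sum_congr rfl fun e _ => ?_
  push_cast
  ring

/-- The key arithmetic identity. -/
lemma key (n : ℕ) :
    32 * (Es n / 4) - 40 * (Ms n / 2) + 8 * Vs n + sig n - (if 2 ∣ n then sig (n / 2) else 0)
      - n * sig n = (if 2 ∣ n then 2 * (n : ℚ) * sig (n / 2) else 0) := by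
  by_cases hn : 2 ∣ n
  · rw [if_pos hn, if_pos hn]
    obtain ⟨h, rfl⟩ := hn
    rw [show 2 * h / 2 = h by omega] at *
    have hV := evalV (2 * h)
    have hVh := evalV h
    have hB := evalB (2 * h)
    have hM := relMBE (2 * h)
    have hE := EsEven (2 * h) ⟨h, rfl⟩
    rw [show 2 * h / 2 = h by omega] at hE
    have h1 := E1Even (2 * h) ⟨h, rfl⟩
    have h2 := E2Even (2 * h) ⟨h, rfl⟩
    have h3 := E3Even (2 * h) ⟨h, rfl⟩
    rw [show 2 * h / 2 = h by omega] at h1 h2 h3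
    rw [h1, h2, h3] at hB
    push_cast at hV hVh hB hM hE ⊢
    linarith [hV, hVh, hB, hM, hE]
  · rw [if_neg hn, if_neg hn]
    have hV := evalV n
    have hB := evalB n
    have hM := relMBE n
    have hE := EsOdd n hn
    have h1 : E1 n = 0 := div_odd_sum n hn _
    have h2 : E2 n = 0 := div_odd_sum n hn _
    have h3 : E3 n = 0 := div_odd_sum n hn _
    rw [h1, h2, h3] at hB
    linarith [hV, hB, hM, hE]

/-! ### Power series layer -/

noncomputable def L : ℚ⟦X⟧ := PowerSeries.mk fun d => sig d

lemma coeff_L (k : ℕ) : coeff k L = sig k := coeff_mk _ _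

lemma coeff_subSq (f : ℚ⟦X⟧) (k : ℕ) :
    coeff k (subSq f) = if 2 ∣ k then coeff (k / 2) f else 0 := coeff_mk _ _

lemma sig_zero : sig 0 = 0 := by simp [sig]

lemma G2_eq : G2 = L - (C (R := ℚ)) (1 / 24) := by
  ext k
  rw [map_sub, coeff_L, coeff_C, G2, coeff_mk]
  rcases Nat.eq_zero_or_pos k with rfl | hk
  · rw [if_pos rfl, if_pos rfl, sig_zero]
    norm_num
  · rw [if_neg (by omega), if_neg (by omega), sub_zero, sig]

lemma subSq_sub_C (f : ℚ⟦X⟧) (c : ℚ) : subSq (f - (C (R := ℚ)) c) = subSq f - (C (R := ℚ)) c := by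
  ext k
  rw [map_sub, coeff_subSq, coeff_subSq, map_sub, coeff_C, coeff_C]
  rcases Nat.eq_zero_or_pos k with rfl | hk
  · norm_num
  · by_cases h2 : 2 ∣ k
    · rw [if_pos h2, if_pos h2, if_neg (by omega), if_neg (by omega), sub_zero]
    · rw [if_neg h2, if_neg h2, if_neg (by omega), sub_zero]

lemma deriv_sub_C (f : ℚ⟦X⟧) (c : ℚ) : (f - (C (R := ℚ)) c).derivativeFun = f.derivativeFun := by
  rw [sub_eq_add_neg, derivativeFun_add, ← map_neg ((C (R := ℚ))),
    show (C (R := ℚ) (-c)).derivativeFun = 0 from derivative_C, add_zero]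

lemma e_eq (i : ℕ) : (if 2 ∣ i then sig (i / 2) else 0)
    = ∑ a ∈ i.divisors, (if 2 ∣ i / a then (a : ℚ) else 0) := by
  by_cases h2 : 2 ∣ i
  · rcases Nat.eq_zero_or_pos i with rfl | hi
    · simp [sig_zero]
    rw [if_pos h2, ← Finset.sum_filter]
    have hset : (i.divisors.filter fun a => 2 ∣ i / a) = (i / 2).divisors := by
      ext a
      simp only [Finset.mem_filter, Nat.mem_divisors]
      constructor
      · rintro ⟨⟨⟨c, hc⟩, h0⟩, hd⟩
        have ha : 0 < a := by
          rcases Nat.eq_zero_or_pos a with rfl | h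
          · omega
          · exact h
        have hca : i / a = c := by rw [hc, Nat.mul_div_cancel_left _ ha]
        rw [hca] at hd
        obtain ⟨c', rfl⟩ := hd
        refine ⟨⟨c', ?_⟩, by omega⟩
        have : a * (2 * c') = 2 * (a * c') := by ring
        omega
      · rintro ⟨⟨c, hc⟩, h0⟩
        have ha : 0 < a := by
          rcases Nat.eq_zero_or_pos a with rfl | h
          · omega
          · exact h
        have hi2 : i = a * (2 * c) := by
          have : a * (2 * c) = 2 * (a * c) := by ring
          omega
        refine ⟨⟨⟨2 * c, hi2⟩, by omega⟩, ?_⟩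
        rw [hi2, Nat.mul_div_cancel_left _ ha]
        exact ⟨c, rfl⟩
    rw [hset, sig]
  · rw [if_neg h2]
    refine (Finset.sum_eq_zero fun a ha => ?_).symm
    rw [if_neg]
    intro hd
    obtain ⟨k, hk⟩ := hd
    obtain ⟨hdvd, h0⟩ := Nat.mem_divisors.1 ha
    have hia := Nat.mul_div_cancel' hdvd
    rw [hk] at hia
    apply h2
    refine ⟨a * k, ?_⟩
    rw [← hia]
    ring

lemma gl3 (n : ℕ) : ∑ p ∈ antidiagonal n, sig p.1 * sig p.2 = Vs n := by
  have h := glue n (fun a _ => (a : ℚ)) (fun b _ => (b : ℚ))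
  beta_reduce at h
  rw [Vs, ← h]
  rfl

lemma gl2 (n : ℕ) : ∑ p ∈ antidiagonal n, (if 2 ∣ p.1 then sig (p.1 / 2) else 0) * sig p.2
    = Ms n / 2 := by
  have step : ∀ p ∈ antidiagonal n, (if 2 ∣ p.1 then sig (p.1 / 2) else 0) * sig p.2
      = (∑ a ∈ p.1.divisors, (if 2 ∣ p.1 / a then (a : ℚ) else 0))
        * (∑ b ∈ p.2.divisors, (b : ℚ)) := by
    intro p _
    rw [← e_eq]
    rfl
  rw [Finset.sum_congr rfl step]
  have h := glue n (fun a x => if 2 ∣ x then (a : ℚ) else 0) (fun b _ => (b : ℚ))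
  beta_reduce at h
  rw [h, ← conv2 n]
  refine Finset.sum_congr rfl fun q _ => ?_
  split_ifs
  · rfl
  · rw [zero_mul]

lemma gl1 (n : ℕ) : ∑ p ∈ antidiagonal n,
    (if 2 ∣ p.1 then sig (p.1 / 2) else 0) * (if 2 ∣ p.2 then sig (p.2 / 2) else 0)
    = Es n / 4 := by
  have step : ∀ p ∈ antidiagonal n,
      (if 2 ∣ p.1 then sig (p.1 / 2) else 0) * (if 2 ∣ p.2 then sig (p.2 / 2) else 0)
      = (∑ a ∈ p.1.divisors, (if 2 ∣ p.1 / a then (a : ℚ) else 0))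
        * (∑ b ∈ p.2.divisors, (if 2 ∣ p.2 / b then (b : ℚ) else 0)) := by
    intro p _
    rw [← e_eq, ← e_eq]
  rw [Finset.sum_congr rfl step]
  have h := glue n (fun a x => if 2 ∣ x then (a : ℚ) else 0)
    (fun b y => if 2 ∣ y then (b : ℚ) else 0)
  beta_reduce at h
  rw [h, ← conv1 n]
  refine Finset.sum_congr rfl fun q _ => ?_
  by_cases h1 : 2 ∣ q.2.2.1 <;> by_cases h2 : 2 ∣ q.2.2.2 <;> simp [h1, h2]

theorem keyPS :
    32 * (subSq L * subSq L) - 40 * (subSq L * L) + 8 * (L * L) + L - subSq L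
        - X * L.derivativeFun
      = 4 * (X ^ 2 * subSq L.derivativeFun) := by
  ext n
  have h1 : coeff n ((32 : ℚ⟦X⟧) * (subSq L * subSq L)) = 32 * (Es n / 4) := by
    rw [show ((32 : ℚ⟦X⟧)) = (C (R := ℚ)) 32 from (map_ofNat ((C (R := ℚ))) 32).symm, coeff_C_mul, coeff_mul,
      ← gl1 n]
    congr 1
    refine Finset.sum_congr rfl fun p _ => ?_
    rw [coeff_subSq, coeff_subSq, coeff_L, coeff_L]
  have h2 : coeff n ((40 : ℚ⟦X⟧) * (subSq L * L)) = 40 * (Ms n / 2) := by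
    rw [show ((40 : ℚ⟦X⟧)) = (C (R := ℚ)) 40 from (map_ofNat ((C (R := ℚ))) 40).symm, coeff_C_mul, coeff_mul,
      ← gl2 n]
    congr 1
    refine Finset.sum_congr rfl fun p _ => ?_
    rw [coeff_subSq, coeff_L, coeff_L]
  have h3 : coeff n ((8 : ℚ⟦X⟧) * (L * L)) = 8 * Vs n := by
    rw [show ((8 : ℚ⟦X⟧)) = (C (R := ℚ)) 8 from (map_ofNat ((C (R := ℚ))) 8).symm, coeff_C_mul, coeff_mul,
      ← gl3 n]
    congr 1
    refine Finset.sum_congr rfl fun p _ => ?_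
    rw [coeff_L, coeff_L]
  have h5 : coeff n (subSq L) = if 2 ∣ n then sig (n / 2) else 0 := by
    rw [coeff_subSq, coeff_L]
  have h6 : coeff n (X * L.derivativeFun) = (n : ℚ) * sig n := by
    rw [← pow_one (X : ℚ⟦X⟧), coeff_X_pow_mul']
    by_cases hn : 1 ≤ n
    · rw [if_pos hn, show ∀ m, coeff m L.derivativeFun = coeff (m + 1) L * (m + 1) from coeff_derivative L, coeff_L, show n - 1 + 1 = n by omega,
        Nat.cast_sub hn]
      push_cast
      ring
    · have hn0 : n = 0 := by omega
      subst hn0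
      simp [sig_zero]
  have h7 : coeff n ((4 : ℚ⟦X⟧) * (X ^ 2 * subSq L.derivativeFun))
      = if 2 ∣ n then 2 * (n : ℚ) * sig (n / 2) else 0 := by
    rw [show ((4 : ℚ⟦X⟧)) = (C (R := ℚ)) 4 from (map_ofNat ((C (R := ℚ))) 4).symm, coeff_C_mul,
      coeff_X_pow_mul']
    by_cases hn : 2 ≤ n
    · rw [if_pos hn, coeff_subSq]
      by_cases h2 : 2 ∣ n
      · rw [if_pos (show 2 ∣ n - 2 by omega), if_pos h2, show ∀ m, coeff m L.derivativeFun = coeff (m + 1) L * (m + 1) from coeff_derivative L, coeff_L,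
          show (n - 2) / 2 + 1 = n / 2 by omega,
          show ((n - 2) / 2 : ℕ) = n / 2 - 1 from by omega,
          Nat.cast_sub (show 1 ≤ n / 2 by omega)]
        have hcast : ((n / 2 : ℕ) : ℚ) * 2 = (n : ℚ) := by
          have hq := Nat.div_mul_cancel h2
          exact_mod_cast congrArg (fun x : ℕ => (x : ℚ)) hq
        push_cast
        linear_combination 2 * sig (n / 2) * hcast
      · rw [if_neg (show ¬ 2 ∣ n - 2 by omega), if_neg h2, mul_zero]
    · rw [if_neg hn, mul_zero]
      have : n = 0 ∨ n = 1 := by omega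
      rcases this with rfl | rfl
      · rw [if_pos (by omega)]
        simp [sig_zero]
      · rw [if_neg (by omega)]
  simp only [map_sub, map_add]
  rw [h1, h2, h3, coeff_L, h5, h6, h7]
  exact key n

end Stmt4Aux

open Stmt4Aux in
theorem stmt4 :
    32 * (subSq G2) ^ 2 - 40 * (subSq G2) * G2 + 8 * G2 ^ 2 - X * G2.derivativeFun
      = 4 * X ^ 2 * subSq G2.derivativeFun := by
  have h24 : (C (R := ℚ)) (1 / 24) * 24 = 1 := by
    rw [show ((24 : ℚ⟦X⟧)) = (C (R := ℚ)) 24 from (map_ofNat ((C (R := ℚ))) 24).symm, ← map_mul]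
    norm_num
  rw [G2_eq, subSq_sub_C, deriv_sub_C]
  linear_combination keyPS + (L - subSq L) * h24
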